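/- arXiv:math/0610813 — 4 statements merged into one kernel-verified Lean document; each statement's English description precedes it below -/
import Mathlib

section
/- Let C ⊆ (S^{n-1})^m be finite such that for all distinct u, v in C, (1/m)∑_{i=1}^m ⟨u_i, v_i⟩ ≤ t with t < 1/(mn). Then |C| ≤ 2mn(1-t)/(1 - mnt). -/
open Finset

/-- Four-fold sum swap. -/
lemma stmt7_swap4 {α β γ δ : Type*} (s : Finset α) (t : Finset β) (s' : Finset γ)
    (t' : Finset δ) (F : α → β → γ → δ → ℝ) :
    ∑ a ∈ s, ∑ b ∈ t, ∑ c ∈ s', ∑ d ∈ t', F a b c d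
      = ∑ c ∈ s', ∑ d ∈ t', ∑ a ∈ s, ∑ b ∈ t, F a b c d := by
  calc ∑ a ∈ s, ∑ b ∈ t, ∑ c ∈ s', ∑ d ∈ t', F a b c d
      = ∑ a ∈ s, ∑ c ∈ s', ∑ b ∈ t, ∑ d ∈ t', F a b c d :=
        Finset.sum_congr rfl fun _ _ => Finset.sum_comm
    _ = ∑ c ∈ s', ∑ a ∈ s, ∑ b ∈ t, ∑ d ∈ t', F a b c d := Finset.sum_comm
    _ = ∑ c ∈ s', ∑ a ∈ s, ∑ d ∈ t', ∑ b ∈ t, F a b c d :=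
        Finset.sum_congr rfl fun _ _ => Finset.sum_congr rfl fun _ _ => Finset.sum_comm
    _ = ∑ c ∈ s', ∑ d ∈ t', ∑ a ∈ s, ∑ b ∈ t, F a b c d :=
        Finset.sum_congr rfl fun _ _ => Finset.sum_comm

/-- Gram-matrix trace inequality: `(tr M)^2 ≤ d * tr (M^2)`. -/
lemma stmt7_gram {ι κ : Type*} [Fintype κ] (C : Finset ι) (x : ι → κ → ℝ) :
    (∑ u ∈ C, ∑ p : κ, x u p * x u p) ^ 2 ≤
      (Fintype.card κ : ℝ) * ∑ u ∈ C, ∑ v ∈ C, (∑ p : κ, x u p * x v p) ^ 2 := by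
  set M : κ → κ → ℝ := fun p q => ∑ u ∈ C, x u p * x u q with hM
  have trace : ∑ p : κ, M p p = ∑ u ∈ C, ∑ p : κ, x u p * x u p := Finset.sum_comm
  have cs : (∑ p : κ, M p p) ^ 2 ≤ (Fintype.card κ : ℝ) * ∑ p : κ, (M p p) ^ 2 := by
    simpa using sq_sum_le_card_mul_sum_sq (s := (Finset.univ : Finset κ)) (f := fun p => M p p)
  have diag : ∑ p : κ, (M p p) ^ 2 ≤ ∑ p : κ, ∑ q : κ, (M p q) ^ 2 :=
    Finset.sum_le_sum fun p _ =>
      Finset.single_le_sum (fun q _ => sq_nonneg (M p q)) (Finset.mem_univ p)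
  have expand : ∑ p : κ, ∑ q : κ, (M p q) ^ 2
      = ∑ u ∈ C, ∑ v ∈ C, (∑ p : κ, x u p * x v p) ^ 2 := by
    have e1 : ∀ p q : κ, (M p q) ^ 2
        = ∑ u ∈ C, ∑ v ∈ C, (x u p * x v p) * (x u q * x v q) := by
      intro p q
      rw [sq, hM, Finset.sum_mul_sum]
      exact Finset.sum_congr rfl fun u _ => Finset.sum_congr rfl fun v _ => by ring
    have e2 : ∀ u v : ι, (∑ p : κ, x u p * x v p) ^ 2
        = ∑ p : κ, ∑ q : κ, (x u p * x v p) * (x u q * x v q) := by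
      intro u v; rw [sq, Finset.sum_mul_sum]
    simp_rw [e1, e2]
    exact stmt7_swap4 _ _ _ _ _
  calc (∑ u ∈ C, ∑ p : κ, x u p * x u p) ^ 2 = (∑ p : κ, M p p) ^ 2 := by rw [trace]
    _ ≤ (Fintype.card κ : ℝ) * ∑ p : κ, (M p p) ^ 2 := cs
    _ ≤ (Fintype.card κ : ℝ) * ∑ p : κ, ∑ q : κ, (M p q) ^ 2 := by
        apply mul_le_mul_of_nonneg_left diag (by positivity)
    _ = _ := by rw [expand]

private abbrev E (m n : ℕ) : Type := Fin m → EuclideanSpace ℝ (Fin n)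

set_option maxHeartbeats 800000 in
/-- Degree-2 LP bound on `(S^{n-1})^m`: if all distinct pairs of a finite
`C ⊆ (S^{n-1})^m` satisfy `(1/m) ∑ᵢ ⟨uᵢ, vᵢ⟩ ≤ t` with `t < 1/(mn)`, then
`|C| ≤ 2mn(1-t)/(1 - mnt)`. -/
theorem stmt7 (m n : ℕ) (hm : 0 < m) (hn : 2 ≤ n) (t : ℝ)
    (ht : t < 1 / ((m : ℝ) * n))
    (C : Finset (Fin m → EuclideanSpace ℝ (Fin n)))
    (hunit : ∀ u ∈ C, ∀ i, ‖u i‖ = 1)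
    (hang : ∀ u ∈ C, ∀ v ∈ C, u ≠ v →
      (1 / (m : ℝ)) * ∑ i, (inner ℝ (u i) (v i) : ℝ) ≤ t) :
    (C.card : ℝ) ≤ 2 * m * n * (1 - t) / (1 - m * n * t) := by
  have hm' : (0:ℝ) < m := by exact_mod_cast hm
  have hn' : (0:ℝ) < n := by positivity
  have hmn : (0:ℝ) < (m:ℝ) * n := by positivity
  have hmn1 : (1:ℝ) ≤ (m:ℝ) * n := by
    have : (1:ℝ) ≤ (m:ℝ) := by exact_mod_cast hm
    have : (1:ℝ) ≤ (n:ℝ) := by exact_mod_cast (by omega : 1 ≤ n)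
    nlinarith
  have hden : (0:ℝ) < 1 - (m:ℝ) * n * t := by
    have := (lt_div_iff₀ hmn).mp ht
    nlinarith
  have ht1 : t < 1 := by nlinarith
  rcases C.eq_empty_or_nonempty with hC | hC
  · simp [hC]
    apply div_nonneg <;> nlinarith
  classical
  -- setup
  set x : E m n → (Fin m × Fin n) → ℝ := fun u p => u p.1 p.2 with hx
  set S : E m n → E m n → ℝ := fun u v => ∑ p : Fin m × Fin n, x u p * x v p with hS
  have hinner : ∀ u v : E m n, (∑ i, (inner ℝ (u i) (v i) : ℝ)) = S u v := by
    intro u v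
    rw [hS]
    simp only [Fintype.sum_prod_type]
    exact Finset.sum_congr rfl fun i _ => by
      simp [hx, PiLp.inner_apply, RCLike.inner_apply, conj_trivial, mul_comm]
  have hSuu : ∀ u ∈ C, S u u = (m:ℝ) := by
    intro u hu
    rw [← hinner]
    have : ∀ i : Fin m, (inner ℝ (u i) (u i) : ℝ) = 1 := by
      intro i
      rw [real_inner_self_eq_norm_sq, hunit u hu i]; norm_num
    simp [this, hunit u hu]
  have hub : ∀ u ∈ C, ∀ v ∈ C, u ≠ v → S u v ≤ (m:ℝ) * t := by
    intro u hu v hv huv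
    have := hang u hu v hv huv
    rw [hinner] at this
    rw [div_mul_eq_mul_div, mul_comm] at this
    calc S u v = (m:ℝ) * ((S u v * 1) / m) := by field_simp
      _ ≤ (m:ℝ) * t := by
        apply mul_le_mul_of_nonneg_left _ hm'.le
        simpa using this
  have hlb : ∀ u v : E m n, (∀ i, ‖u i‖ = 1) → (∀ i, ‖v i‖ = 1) → -(m:ℝ) ≤ S u v := by
    intro u v hu hv
    rw [← hinner]
    have : ∀ i : Fin m, (-1:ℝ) ≤ (inner ℝ (u i) (v i) : ℝ) := by
      intro i
      have h1 := abs_real_inner_le_norm (u i) (v i)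
      rw [hu i, hv i] at h1
      have := neg_abs_le (inner ℝ (u i) (v i) : ℝ)
      linarith
    calc -(m:ℝ) = ∑ _i : Fin m, (-1:ℝ) := by simp
      _ ≤ _ := Finset.sum_le_sum fun i _ => this i
  -- positivity of the full double sum
  have hpos : (0:ℝ) ≤ ∑ u ∈ C, ∑ v ∈ C, S u v := by
    have : ∑ u ∈ C, ∑ v ∈ C, S u v
        = ∑ p : Fin m × Fin n, (∑ u ∈ C, x u p) ^ 2 := by
      calc ∑ u ∈ C, ∑ v ∈ C, ∑ p : Fin m × Fin n, x u p * x v p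
          = ∑ u ∈ C, ∑ p : Fin m × Fin n, ∑ v ∈ C, x u p * x v p :=
            Finset.sum_congr rfl fun _ _ => Finset.sum_comm
        _ = ∑ p : Fin m × Fin n, ∑ u ∈ C, ∑ v ∈ C, x u p * x v p := Finset.sum_comm
        _ = ∑ p : Fin m × Fin n, (∑ u ∈ C, x u p) ^ 2 := by
            refine Finset.sum_congr rfl fun p _ => ?_
            rw [sq, Finset.sum_mul_sum]
    rw [this]
    positivity
  set N : ℝ := (C.card : ℝ) with hN
  have hN1 : (1:ℝ) ≤ N := by
    rw [hN]; exact_mod_cast Nat.one_le_iff_ne_zero.mpr (Finset.card_ne_zero_of_mem hC.choose_spec)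
  -- trace inequality
  have key : (N * m) ^ 2 ≤ (m:ℝ) * n * ∑ u ∈ C, ∑ v ∈ C, (S u v) ^ 2 := by
    have := stmt7_gram C x
    have hcard : (Fintype.card (Fin m × Fin n) : ℝ) = (m:ℝ) * n := by
      simp [Fintype.card_prod]
    have htr : ∑ u ∈ C, ∑ p : Fin m × Fin n, x u p * x u p = N * m := by
      have : ∀ u ∈ C, ∑ p : Fin m × Fin n, x u p * x u p = (m:ℝ) := fun u hu => hSuu u hu
      rw [Finset.sum_congr rfl this]
      simp [hN, mul_comm]
    rw [htr, hcard] at this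
    exact this
  -- split off diagonal
  have split : ∀ f : E m n → E m n → ℝ, ∑ u ∈ C, ∑ v ∈ C, f u v
      = ∑ u ∈ C, f u u + ∑ u ∈ C, ∑ v ∈ C.erase u, f u v := by
    intro f
    rw [← Finset.sum_add_distrib]
    exact Finset.sum_congr rfl fun u hu => (Finset.add_sum_erase C (f u) hu).symm
  set Soff : ℝ := ∑ u ∈ C, ∑ v ∈ C.erase u, S u v with hSo
  have hdiagsum : ∑ u ∈ C, S u u = N * m := by
    rw [Finset.sum_congr rfl hSuu]; simp [hN, mul_comm]
  have hSolb : -(N * m) ≤ Soff := by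
    have := hpos
    rw [split S, hdiagsum] at this
    linarith
  -- bound off-diagonal squares
  have hToff : ∑ u ∈ C, ∑ v ∈ C.erase u, (S u v) ^ 2
      ≤ (m:ℝ) * (t - 1) * Soff + (m:ℝ)^2 * t * (N * (N - 1)) := by
    have hpt : ∀ u ∈ C, ∀ v ∈ C.erase u,
        (S u v) ^ 2 ≤ (m:ℝ) * (t - 1) * S u v + (m:ℝ)^2 * t := by
      intro u hu v hv
      have hvC : v ∈ C := Finset.mem_of_mem_erase hv
      have hne : u ≠ v := fun h => (Finset.ne_of_mem_erase hv) h.symm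
      have h1 := hub u hu v hvC hne
      have h2 := hlb u v (hunit u hu) (hunit v hvC)
      nlinarith [h1, h2, hm']
    have step1 : ∑ u ∈ C, ∑ v ∈ C.erase u, (S u v) ^ 2
        ≤ ∑ u ∈ C, ∑ v ∈ C.erase u, ((m:ℝ) * (t - 1) * S u v + (m:ℝ)^2 * t) :=
      Finset.sum_le_sum fun u hu => Finset.sum_le_sum fun v hv => hpt u hu v hv
    have hcard : ∀ u ∈ C, ((C.erase u).card : ℝ) = N - 1 := by
      intro u hu
      rw [Finset.card_erase_of_mem hu, hN]
      have h1 : 1 ≤ C.card := Finset.card_pos.mpr hC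
      rw [Nat.cast_sub h1, Nat.cast_one]
    have step2 : ∑ u ∈ C, ∑ v ∈ C.erase u, ((m:ℝ) * (t - 1) * S u v + (m:ℝ)^2 * t)
        = (m:ℝ) * (t - 1) * Soff + (m:ℝ)^2 * t * (N * (N - 1)) := by
      calc ∑ u ∈ C, ∑ v ∈ C.erase u, ((m:ℝ)*(t-1)*S u v + (m:ℝ)^2*t)
          = ∑ u ∈ C, (((m:ℝ)*(t-1)) * ∑ v ∈ C.erase u, S u v
              + ((C.erase u).card : ℝ) * ((m:ℝ)^2*t)) := by
            refine Finset.sum_congr rfl fun u hu => ?_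
            rw [Finset.sum_add_distrib, Finset.mul_sum, Finset.sum_const, nsmul_eq_mul]
        _ = ((m:ℝ)*(t-1)) * Soff + ∑ u ∈ C, ((C.erase u).card:ℝ) * ((m:ℝ)^2*t) := by
            rw [Finset.sum_add_distrib, ← Finset.mul_sum, hSo]
        _ = (m:ℝ) * (t - 1) * Soff + (m:ℝ)^2 * t * (N * (N - 1)) := by
            rw [Finset.sum_congr rfl (fun u hu => by rw [hcard u hu]),
              Finset.sum_const, nsmul_eq_mul, ← hN]
            ring
    linarith
  -- combine
  have hsplit2 := split (fun u v => (S u v) ^ 2)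
  have hdiagsq : ∑ u ∈ C, (S u u) ^ 2 = N * m^2 := by
    have : ∀ u ∈ C, (S u u)^2 = (m:ℝ)^2 := fun u hu => by rw [hSuu u hu]
    rw [Finset.sum_congr rfl this]; simp [hN, mul_comm]
  have hoffterm : (m:ℝ) * (t - 1) * Soff ≤ (m:ℝ) * (t - 1) * (-(N * m)) := by
    apply mul_le_mul_of_nonpos_left hSolb
    nlinarith
  have K : (N * m) ^ 2 ≤ (m:ℝ) * n *
      (N * m^2 + (m:ℝ) * (t - 1) * (-(N * m)) + (m:ℝ)^2 * t * (N * (N - 1))) := by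
    calc (N * m) ^ 2 ≤ (m:ℝ) * n * ∑ u ∈ C, ∑ v ∈ C, (S u v) ^ 2 := key
      _ = (m:ℝ) * n * (∑ u ∈ C, (S u u)^2 + ∑ u ∈ C, ∑ v ∈ C.erase u, (S u v)^2) := by
          rw [← hsplit2]
      _ ≤ _ := by
          apply mul_le_mul_of_nonneg_left _ hmn.le
          rw [hdiagsq]
          linarith
  have hmsq : (0:ℝ) < (m:ℝ)^2 := by positivity
  have K2 : N^2 ≤ (m:ℝ)*n*(2*N - 2*t*N + t*N^2) := by nlinarith [K, hmsq]
  have hN0 : (0:ℝ) < N := by linarith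
  rw [le_div_iff₀ hden]
  nlinarith [K2, hN0]
end

section
/- Let C be a finite set of m-dimensional subspaces of ℝ^n such that for all distinct p, q ∈ C, trace(π_p π_q) ≤ s where π_p denotes the orthogonal projection onto p. Then one can pick orthonormal bases so that the associated unit vectors in ℝ^{mn} (concatenation divided by √m) form a spherical code in S^{mn-1} with pairwise inner products at most √(s/m); consequently any upper bound on spherical codes in S^{mn-1} with minimum cosine √(s/m) bounds |C|. -/
open Finset
local notation "⟪" x ", " y "⟫" => @inner ℝ _ _ x y

lemma trace_eq_sum_inner' {E : Type*} [NormedAddCommGroup E] [InnerProductSpace ℝ E]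
    [FiniteDimensional ℝ E] {ι : Type*} [Fintype ι] [DecidableEq ι]
    (b : OrthonormalBasis ι ℝ E) (T : E →ₗ[ℝ] E) :
    LinearMap.trace ℝ E T = ∑ i, ⟪b i, T (b i)⟫ := by
  rw [LinearMap.trace_eq_matrix_trace ℝ b.toBasis, Matrix.trace]
  congr 1
  ext i
  rw [Matrix.diag_apply, LinearMap.toMatrix_apply, b.coe_toBasis_repr_apply,
    b.repr_apply_apply, b.coe_toBasis]

lemma trace_proj_proj {n m₁ m₂ : ℕ} (p q : Submodule ℝ (EuclideanSpace ℝ (Fin n)))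
    (bp : OrthonormalBasis (Fin m₁) ℝ p) (bq : OrthonormalBasis (Fin m₂) ℝ q) :
    LinearMap.trace ℝ (EuclideanSpace ℝ (Fin n))
      (((p.subtypeL ∘L p.orthogonalProjection).toLinearMap) ∘ₗ
        ((q.subtypeL ∘L q.orthogonalProjection).toLinearMap))
    = ∑ i, ∑ j, ⟪(bp i : EuclideanSpace ℝ (Fin n)), (bq j : EuclideanSpace ℝ (Fin n))⟫ ^ 2 := by
  set E := EuclideanSpace ℝ (Fin n)
  set b := EuclideanSpace.basisFun (Fin n) ℝ
  rw [trace_eq_sum_inner' b]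
  have hP : ∀ x : E, (p.orthogonalProjection x : E) = ∑ i, ⟪(bp i : E), x⟫ • (bp i : E) := by
    intro x
    rw [bp.orthogonalProjectionOnto_apply_eq_sum]
    push_cast
    rfl
  have hQ : ∀ x : E, (q.orthogonalProjection x : E) = ∑ j, ⟪(bq j : E), x⟫ • (bq j : E) := by
    intro x
    rw [bq.orthogonalProjectionOnto_apply_eq_sum]
    push_cast
    rfl
  have step : ∀ k, ⟪b k, (((p.subtypeL ∘L p.orthogonalProjection).toLinearMap) ∘ₗ
        ((q.subtypeL ∘L q.orthogonalProjection).toLinearMap)) (b k)⟫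
      = ∑ i, ∑ j, ⟪(bp i : E), (bq j : E)⟫ * (⟪(bq j : E), b k⟫ * ⟪b k, (bp i : E)⟫) := by
    intro k
    simp only [LinearMap.comp_apply, ContinuousLinearMap.coe_coe,
      ContinuousLinearMap.comp_apply, Submodule.subtypeL_apply]
    rw [hQ (b k), hP]
    simp only [inner_sum, real_inner_smul_right, Finset.sum_mul]
    refine Finset.sum_congr rfl fun i _ => Finset.sum_congr rfl fun j _ => by ring
  simp_rw [step]
  rw [Finset.sum_comm]
  refine Finset.sum_congr rfl fun i _ => ?_
  rw [Finset.sum_comm]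
  refine Finset.sum_congr rfl fun j _ => ?_
  rw [← Finset.mul_sum, b.sum_inner_mul_inner, real_inner_comm ((bq j : E)), sq]



/-- From a Grassmannian code `C` of `m`-dimensional subspaces of `ℝⁿ` with
`trace(π_p π_q) ≤ s` for distinct `p, q`, one can pick orthonormal bases so that the
concatenated unit vectors (divided by `√m`) form a spherical code in `S^{mn-1}` with
pairwise inner products at most `√(s/m)`; consequently any bound on such spherical codes
bounds `|C|`. -/
theorem stmt8 (m n : ℕ) (hm : 0 < m) (s : ℝ) (hs : s < m)
    (C : Finset (Submodule ℝ (EuclideanSpace ℝ (Fin n))))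
    (hdim : ∀ p ∈ C, Module.finrank ℝ p = m)
    (hσ : ∀ p ∈ C, ∀ q ∈ C, p ≠ q →
      RCLike.re (LinearMap.trace ℝ (EuclideanSpace ℝ (Fin n))
        (((p.subtypeL ∘L p.orthogonalProjection).toLinearMap) ∘ₗ
          ((q.subtypeL ∘L q.orthogonalProjection).toLinearMap))) ≤ s) :
    ∃ β : Submodule ℝ (EuclideanSpace ℝ (Fin n)) → EuclideanSpace ℝ (Fin m × Fin n),
      (∀ p ∈ C, ∃ e : Fin m → EuclideanSpace ℝ (Fin n),
        Orthonormal ℝ e ∧ (∀ i, e i ∈ p) ∧ (∀ i k, β p (i, k) = e i k / Real.sqrt m)) ∧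
      (∀ p ∈ C, ‖β p‖ = 1) ∧
      (∀ p ∈ C, ∀ q ∈ C, p ≠ q → (inner ℝ (β p) (β q) : ℝ) ≤ Real.sqrt (s / m)) ∧
      (∀ M : ℕ,
        (∀ D : Finset (EuclideanSpace ℝ (Fin m × Fin n)),
          (∀ u ∈ D, ‖u‖ = 1) →
          (∀ u ∈ D, ∀ v ∈ D, u ≠ v → (inner ℝ u v : ℝ) ≤ Real.sqrt (s / m)) →
          D.card ≤ M) →
        C.card ≤ M) := by
  classical
  have hmR : (0:ℝ) < m := by exact_mod_cast hm
  have hsm : (0:ℝ) < Real.sqrt m := Real.sqrt_pos.mpr hmR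
  set E := EuclideanSpace ℝ (Fin n) with hE
  let bB : ∀ p : Submodule ℝ E, Module.finrank ℝ p = m → OrthonormalBasis (Fin m) ℝ p :=
    fun p h => (stdOrthonormalBasis ℝ p).reindex (finCongr h)
  let ee : Submodule ℝ E → Fin m → E :=
    fun p => if h : Module.finrank ℝ p = m then fun i => ((bB p h i : E)) else 0
  let β : Submodule ℝ E → EuclideanSpace ℝ (Fin m × Fin n) :=
    fun p => WithLp.toLp 2 (fun ik : Fin m × Fin n => ee p ik.1 ik.2 / Real.sqrt m)
  have hee : ∀ p, ∀ hp : p ∈ C, ∀ i, ee p i = (bB p (hdim p hp) i : E) := by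
    intro p hp i
    simp only [ee, dif_pos (hdim p hp)]
    rw [dif_pos (hdim p hp)]
  -- orthonormality of ee p
  have horth : ∀ p ∈ C, Orthonormal ℝ (ee p) := by
    intro p hp
    have : ee p = (p.subtypeₗᵢ : p →ₗᵢ[ℝ] E) ∘ (bB p (hdim p hp)) := by
      funext i
      rw [hee p hp i]
      rfl
    rw [this]
    exact (bB p (hdim p hp)).orthonormal.comp_linearIsometry _
  have hmem : ∀ p ∈ C, ∀ i, ee p i ∈ p := by
    intro p hp i
    rw [hee p hp i]
    exact (bB p (hdim p hp) i).2
  -- pointwise norms: ∑_k (ee p i k)^2 = 1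
  have hsq : ∀ p ∈ C, ∀ i, ∑ k, (ee p i k)^2 = 1 := by
    intro p hp i
    have h1 : (⟪ee p i, ee p i⟫ : ℝ) = 1 := by
      rw [real_inner_self_eq_norm_sq, (horth p hp).1 i]
      norm_num
    rw [← h1, PiLp.inner_apply]
    refine Finset.sum_congr rfl fun k _ => ?_
    simp [RCLike.inner_apply, sq]
  -- norm of β p
  have hnorm : ∀ p ∈ C, ‖β p‖ = 1 := by
    intro p hp
    rw [EuclideanSpace.norm_eq]
    have : ∑ ik : Fin m × Fin n, ‖β p ik‖^2 = 1 := by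
      simp only [β, Real.norm_eq_abs, sq_abs, div_pow,
        Real.sq_sqrt hmR.le, Fintype.sum_prod_type, ← Finset.sum_div]
      rw [Finset.sum_congr rfl (fun i (_ : i ∈ univ) => hsq p hp i)]
      simp
      exact hm.ne'
    rw [this, Real.sqrt_one]
  -- inner products
  have hinner : ∀ p ∈ C, ∀ q ∈ C,
      (inner ℝ (β p) (β q) : ℝ) = (∑ i, ⟪ee p i, ee q i⟫) / m := by
    intro p hp q hq
    rw [PiLp.inner_apply]
    simp only [RCLike.inner_apply, starRingEnd_apply, star_trivial]
    rw [Fintype.sum_prod_type]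
    rw [Finset.sum_div]
    refine Finset.sum_congr rfl fun i _ => ?_
    rw [PiLp.inner_apply]
    simp only [RCLike.inner_apply, starRingEnd_apply, star_trivial]
    rw [Finset.sum_div]
    refine Finset.sum_congr rfl fun k _ => ?_
    simp only [β]
    rw [div_mul_div_comm, Real.mul_self_sqrt hmR.le]
  have hinner_le : ∀ p ∈ C, ∀ q ∈ C, p ≠ q →
      (inner ℝ (β p) (β q) : ℝ) ≤ Real.sqrt (s / m) := by
    intro p hp q hq hpq
    have htr := trace_proj_proj p q (bB p (hdim p hp)) (bB q (hdim q hq))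
    have hσ' := hσ p hp q hq hpq
    rw [htr] at hσ'
    simp only [RCLike.re_to_real] at hσ'
    have hσ'' : ∑ i, ∑ j, ⟪ee p i, ee q j⟫^2 ≤ s := by
      refine le_trans (le_of_eq ?_) hσ'
      exact Finset.sum_congr rfl fun i _ => Finset.sum_congr rfl fun j _ => by
        rw [hee p hp i, hee q hq j]
    set a : Fin m → ℝ := fun i => ⟪ee p i, ee q i⟫ with ha
    have h1 : ∑ i, (a i)^2 ≤ ∑ i, ∑ j, ⟪ee p i, ee q j⟫^2 :=
      Finset.sum_le_sum fun i _ =>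
        Finset.single_le_sum (f := fun j => ⟪ee p i, ee q j⟫^2)
          (fun j _ => sq_nonneg _) (Finset.mem_univ i)
    have h2 : (∑ i, a i)^2 ≤ (m : ℝ) * ∑ i, (a i)^2 := by
      have := sq_sum_le_card_mul_sum_sq (s := (univ : Finset (Fin m))) (f := a)
      simpa using this
    have h3 : (∑ i, a i)^2 ≤ (m:ℝ) * s := by
      calc (∑ i, a i)^2 ≤ (m:ℝ) * ∑ i, (a i)^2 := h2
        _ ≤ (m:ℝ) * s := by
            refine mul_le_mul_of_nonneg_left (le_trans h1 hσ'') hmR.le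
    have h4 : ∑ i, a i ≤ Real.sqrt ((m:ℝ) * s) := by
      calc ∑ i, a i ≤ |∑ i, a i| := le_abs_self _
        _ = Real.sqrt ((∑ i, a i)^2) := (Real.sqrt_sq_eq_abs _).symm
        _ ≤ Real.sqrt ((m:ℝ)*s) := Real.sqrt_le_sqrt h3
    have h5 : Real.sqrt ((m:ℝ)*s) = m * Real.sqrt (s/m) := by
      rw [show (m:ℝ)*s = (m:ℝ)^2 * (s/m) by field_simp,
        Real.sqrt_mul (sq_nonneg _), Real.sqrt_sq hmR.le]
    rw [hinner p hp q hq, div_le_iff₀ hmR]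
    calc ∑ i, a i ≤ Real.sqrt ((m:ℝ)*s) := h4
      _ = Real.sqrt (s/m) * m := by rw [h5]; ring
  have hspan : ∀ p ∈ C, Submodule.span ℝ (Set.range (ee p)) = p := by
    intro p hp
    have h : ee p = (p.subtype) ∘ (fun i => bB p (hdim p hp) i) := by
      funext i
      rw [hee p hp i]
      rfl
    rw [h, Set.range_comp, Submodule.span_image,
      show Set.range (fun i => bB p (hdim p hp) i) = Set.range ((bB p (hdim p hp)).toBasis) by
        rw [(bB p (hdim p hp)).coe_toBasis],
      Module.Basis.span_eq, Submodule.map_top, Submodule.range_subtype]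
  have hinj : Set.InjOn β C := by
    intro p hp q hq hβ
    have heq : ee p = ee q := by
      funext i
      ext k
      have h := congrArg (fun v => v (i, k)) hβ
      simp only [β] at h
      exact (div_left_inj' hsm.ne').mp h
    rw [← hspan p hp, ← hspan q hq, heq]
  refine ⟨β, ?_, hnorm, hinner_le, ?_⟩
  · intro p hp
    exact ⟨ee p, horth p hp, hmem p hp, fun i k => rfl⟩
  · intro M hM
    have hD := hM (C.image β)
      (by
        intro u hu
        obtain ⟨p, hp, rfl⟩ := Finset.mem_image.mp hu
        exact hnorm p hp)
      (by
        intro u hu v hv huv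
        obtain ⟨p, hp, rfl⟩ := Finset.mem_image.mp hu
        obtain ⟨q, hq, rfl⟩ := Finset.mem_image.mp hv
        exact hinner_le p hp q hq (fun h => huv (by rw [h])))
    rwa [Finset.card_image_of_injOn hinj] at hD
end

section
/- In Proposition on the CD-kernel bound: with y ∈ ℝ^m satisfying P_i(y_t) ≥ 0 for 0 ≤ i ≤ k_t and P_{k_t+1}(y_t) ≤ 0 for all t, the inner product of F(x) := K_k(x,y) N_k(x,y) with the constant 1 (under the product orthogonality measure) equals f_0 = ∑_{t=1}^m d_{k_t} a_{k_t} (−P_{k_t}(y_t) P_{k_t+1}(y_t)) ∏_{j≠t} ∑_{i=0}^{k_j} d_i P_i(y_j)², where K_k and N_k are the product Christoffel–Darboux kernel and its numerator. -/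
open MeasureTheory

/-- One-variable Christoffel–Darboux kernel evaluated against a fixed point `yv`. -/
def Sf (P : ℕ → ℝ → ℝ) (d : ℕ → ℝ) (k : ℕ) (yv : ℝ) (x : ℝ) : ℝ :=
  ∑ i ∈ Finset.range (k + 1), d i * P i x * P i yv

/-- One-variable Christoffel–Darboux numerator factor. -/
def Df (P : ℕ → ℝ → ℝ) (k : ℕ) (yv : ℝ) (x : ℝ) : ℝ :=
  P (k + 1) x * P k yv - P k x * P (k + 1) yv

lemma piProd {m : ℕ} (μ : Measure ℝ) [SigmaFinite μ] (f : Fin m → ℝ → ℝ) :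
    ∫ x : Fin m → ℝ, ∏ j, f j (x j) ∂(Measure.pi fun _ => μ) = ∏ j, ∫ x, f j x ∂μ :=
  MeasureTheory.integral_fintype_prod_eq_prod (f := f) (μ := fun _ => μ)

lemma piIntegrable {m : ℕ} (μ : Measure ℝ) [SigmaFinite μ] (f : Fin m → ℝ → ℝ)
    (hf : ∀ j, Integrable (f j) μ) :
    Integrable (fun x : Fin m → ℝ => ∏ j, f j (x j)) (Measure.pi fun _ => μ) :=
  Integrable.fintype_prod (f := f) (μ := fun _ => μ) hf

lemma SS_lemma (μ : Measure ℝ) (P : ℕ → ℝ → ℝ) (d : ℕ → ℝ)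
    (hint : ∀ k l, Integrable (fun x => P k x * P l x) μ)
    (horth : ∀ k l, ∫ x, P k x * P l x ∂μ = if k = l then (d k)⁻¹ else 0)
    (k : ℕ) (yv : ℝ) :
    Integrable (fun x => Sf P d k yv x * Sf P d k yv x) μ ∧
      ∫ x, Sf P d k yv x * Sf P d k yv x ∂μ
        = ∑ i ∈ Finset.range (k + 1), d i * P i yv ^ 2 := by
  have hrw : (fun x => Sf P d k yv x * Sf P d k yv x)
      = fun x => ∑ i ∈ Finset.range (k + 1), ∑ i' ∈ Finset.range (k + 1),
          (d i * P i yv * (d i' * P i' yv)) * (P i x * P i' x) := by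
    funext x
    simp only [Sf]
    rw [Finset.sum_mul_sum]
    exact Finset.sum_congr rfl fun i _ => Finset.sum_congr rfl fun i' _ => by ring
  have hintg : ∀ i ∈ Finset.range (k + 1), Integrable
      (fun x => ∑ i' ∈ Finset.range (k + 1),
        (d i * P i yv * (d i' * P i' yv)) * (P i x * P i' x)) μ :=
    fun i _ => integrable_finset_sum _ fun i' _ => (hint i i').const_mul _
  refine ⟨by rw [hrw]; exact integrable_finset_sum _ hintg, ?_⟩
  rw [hrw, integral_finset_sum _ hintg]
  refine Finset.sum_congr rfl fun i hi => ?_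
  rw [integral_finset_sum _ fun i' _ => (hint i i').const_mul _]
  have : ∀ i' ∈ Finset.range (k + 1),
      ∫ x, (d i * P i yv * (d i' * P i' yv)) * (P i x * P i' x) ∂μ
        = if i = i' then (d i * P i yv * (d i' * P i' yv)) * (d i)⁻¹ else 0 := by
    intro i' _
    rw [MeasureTheory.integral_const_mul, horth]
    split <;> simp
  rw [Finset.sum_congr rfl this, Finset.sum_ite_eq, if_pos hi]
  rcases eq_or_ne (d i) 0 with h | h
  · simp [h]
  · field_simp

lemma SD_lemma (μ : Measure ℝ) (P : ℕ → ℝ → ℝ) (d : ℕ → ℝ)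
    (hint : ∀ k l, Integrable (fun x => P k x * P l x) μ)
    (horth : ∀ k l, ∫ x, P k x * P l x ∂μ = if k = l then (d k)⁻¹ else 0)
    (k : ℕ) (yv : ℝ) :
    Integrable (fun x => Sf P d k yv x * Df P k yv x) μ ∧
      ∫ x, Sf P d k yv x * Df P k yv x ∂μ
        = -(d k * P k yv * P (k + 1) yv) * (d k)⁻¹ := by
  have hrw : (fun x => Sf P d k yv x * Df P k yv x)
      = fun x => ∑ i ∈ Finset.range (k + 1),
          ((d i * P i yv * P k yv) * (P i x * P (k + 1) x)
            + (-(d i * P i yv * P (k + 1) yv)) * (P i x * P k x)) := by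
    funext x
    simp only [Sf, Df]
    rw [Finset.sum_mul]
    exact Finset.sum_congr rfl fun i _ => by ring
  have hintg : ∀ i ∈ Finset.range (k + 1), Integrable
      (fun x => (d i * P i yv * P k yv) * (P i x * P (k + 1) x)
        + (-(d i * P i yv * P (k + 1) yv)) * (P i x * P k x)) μ :=
    fun i _ => ((hint i (k + 1)).const_mul _).add ((hint i k).const_mul _)
  refine ⟨by rw [hrw]; exact integrable_finset_sum _ hintg, ?_⟩
  rw [hrw, integral_finset_sum _ hintg]
  have hval : ∀ i ∈ Finset.range (k + 1),
      (∫ x, (d i * P i yv * P k yv) * (P i x * P (k + 1) x)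
        + (-(d i * P i yv * P (k + 1) yv)) * (P i x * P k x) ∂μ)
        = if i = k then (-(d i * P i yv * P (k + 1) yv)) * (d i)⁻¹ else 0 := by
    intro i hi
    rw [integral_add ((hint i (k + 1)).const_mul _) ((hint i k).const_mul _),
      MeasureTheory.integral_const_mul, MeasureTheory.integral_const_mul, horth, horth]
    have hik : i ≠ k + 1 := by
      have := Finset.mem_range.mp hi; omega
    rw [if_neg hik]
    split <;> simp
  rw [Finset.sum_congr rfl hval, Finset.sum_ite_eq', if_pos (by simp)]

/-- Computation of `f₀ = [K_k(·,y) N_k(·,y), 1]` for the product Christoffel–Darboux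
kernel `K_k` and its numerator `N_k`, under the product orthogonality measure:
`f₀ = ∑_t d_{k_t} a_{k_t} (−P_{k_t}(y_t) P_{k_t+1}(y_t)) ∏_{j≠t} ∑_{i≤k_j} d_i P_i(y_j)²`. -/
theorem stmt15 (μ : Measure ℝ) [IsProbabilityMeasure μ]
    (P : ℕ → ℝ → ℝ) (d a : ℕ → ℝ)
    (hmeas : ∀ k, Measurable (P k))
    (hint : ∀ k l, Integrable (fun x => P k x * P l x) μ)
    (horth : ∀ k l, ∫ x, P k x * P l x ∂μ = if k = l then (d k)⁻¹ else 0)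
    (m : ℕ) (kk : Fin m → ℕ) (y : Fin m → ℝ)
    (hy1 : ∀ t : Fin m, ∀ i ≤ kk t, 0 ≤ P i (y t))
    (hy2 : ∀ t : Fin m, P (kk t + 1) (y t) ≤ 0) :
    (∫ x : Fin m → ℝ,
        (∏ j, ∑ i ∈ Finset.range (kk j + 1), d i * P i (x j) * P i (y j)) *
          (∑ t, d (kk t) * a (kk t) *
            (P (kk t + 1) (x t) * P (kk t) (y t) - P (kk t) (x t) * P (kk t + 1) (y t)) *
            ∏ j ∈ Finset.univ.erase t,
              ∑ i ∈ Finset.range (kk j + 1), d i * P i (x j) * P i (y j))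
        ∂(Measure.pi fun _ : Fin m => μ)) =
      ∑ t, d (kk t) * a (kk t) * (-(P (kk t) (y t) * P (kk t + 1) (y t))) *
        ∏ j ∈ Finset.univ.erase t,
          ∑ i ∈ Finset.range (kk j + 1), d i * (P i (y j)) ^ 2 := by
  have hSS := fun j : Fin m => SS_lemma μ P d hint horth (kk j) (y j)
  have hSD := fun t : Fin m => SD_lemma μ P d hint horth (kk t) (y t)
  have hmain : ∀ x : Fin m → ℝ,
      (∏ j, ∑ i ∈ Finset.range (kk j + 1), d i * P i (x j) * P i (y j)) *
        (∑ t, d (kk t) * a (kk t) *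
          (P (kk t + 1) (x t) * P (kk t) (y t) - P (kk t) (x t) * P (kk t + 1) (y t)) *
          ∏ j ∈ Finset.univ.erase t,
            ∑ i ∈ Finset.range (kk j + 1), d i * P i (x j) * P i (y j))
      = ∑ t, (d (kk t) * a (kk t)) *
          ∏ j, (if j = t then Sf P d (kk j) (y j) (x j) * Df P (kk t) (y t) (x j)
                else Sf P d (kk j) (y j) (x j) * Sf P d (kk j) (y j) (x j)) := by
    intro x
    rw [Finset.mul_sum]
    refine Finset.sum_congr rfl fun t _ => ?_
    have h1 : (∏ j, (if j = t then Sf P d (kk j) (y j) (x j) * Df P (kk t) (y t) (x j)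
        else Sf P d (kk j) (y j) (x j) * Sf P d (kk j) (y j) (x j)))
        = (Sf P d (kk t) (y t) (x t) * Df P (kk t) (y t) (x t)) *
          ∏ j ∈ Finset.univ.erase t,
            Sf P d (kk j) (y j) (x j) * Sf P d (kk j) (y j) (x j) := by
      rw [← Finset.mul_prod_erase _ _ (Finset.mem_univ t), if_pos rfl]
      exact congrArg _ (Finset.prod_congr rfl fun j hj =>
        if_neg (Finset.ne_of_mem_erase hj))
    have h2 : (∏ j, ∑ i ∈ Finset.range (kk j + 1), d i * P i (x j) * P i (y j))
        = Sf P d (kk t) (y t) (x t) *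
          ∏ j ∈ Finset.univ.erase t, Sf P d (kk j) (y j) (x j) :=
      (Finset.mul_prod_erase _ (fun j => Sf P d (kk j) (y j) (x j))
        (Finset.mem_univ t)).symm
    rw [h1, h2]
    simp only [Sf, Df, Finset.prod_mul_distrib]
    ring
  rw [integral_congr_ae (Filter.Eventually.of_forall hmain)]
  have hintg : ∀ t : Fin m, Integrable
      (fun x : Fin m → ℝ => (d (kk t) * a (kk t)) *
        ∏ j, (if j = t then Sf P d (kk j) (y j) (x j) * Df P (kk t) (y t) (x j)
              else Sf P d (kk j) (y j) (x j) * Sf P d (kk j) (y j) (x j)))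
      (Measure.pi fun _ : Fin m => μ) := by
    intro t
    refine Integrable.const_mul ?_ _
    refine piIntegrable μ (fun j x => if j = t then Sf P d (kk j) (y j) x * Df P (kk t) (y t) x
      else Sf P d (kk j) (y j) x * Sf P d (kk j) (y j) x) fun j => ?_
    by_cases h : j = t
    · subst h; simpa using (hSD j).1
    · simpa [h] using (hSS j).1
  rw [integral_finset_sum _ fun t _ => hintg t]
  refine Finset.sum_congr rfl fun t _ => ?_
  rw [MeasureTheory.integral_const_mul,
    piProd μ (fun j x => if j = t then Sf P d (kk j) (y j) x * Df P (kk t) (y t) x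
      else Sf P d (kk j) (y j) x * Sf P d (kk j) (y j) x),
    ← Finset.mul_prod_erase _ _ (Finset.mem_univ t),
    show (fun x : ℝ => if t = t then Sf P d (kk t) (y t) x * Df P (kk t) (y t) x
        else Sf P d (kk t) (y t) x * Sf P d (kk t) (y t) x)
      = fun x => Sf P d (kk t) (y t) x * Df P (kk t) (y t) x from funext fun x => if_pos rfl,
    (hSD t).2]
  have hprod : (∏ j ∈ Finset.univ.erase t,
      ∫ x, if j = t then Sf P d (kk j) (y j) x * Df P (kk t) (y t) x
        else Sf P d (kk j) (y j) x * Sf P d (kk j) (y j) x ∂μ)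
      = ∏ j ∈ Finset.univ.erase t, ∑ i ∈ Finset.range (kk j + 1), d i * P i (y j) ^ 2 := by
    refine Finset.prod_congr rfl fun j hj => ?_
    rw [show (fun x => if j = t then Sf P d (kk j) (y j) x * Df P (kk t) (y t) x
        else Sf P d (kk j) (y j) x * Sf P d (kk j) (y j) x)
      = fun x => Sf P d (kk j) (y j) x * Sf P d (kk j) (y j) x from
        funext fun x => if_neg (Finset.ne_of_mem_erase hj), (hSS j).2]
  rw [hprod]
  rcases eq_or_ne (d (kk t)) 0 with h | h
  · simp [h]
  · field_simp
end

section
/- Let C be a finite set of lines in K^n (K = ℝ or ℂ), i.e., C ⊆ P^{n-1}(K), such that for all distinct p, q ∈ C, cos²θ(p,q) = |⟨e_p, e_q⟩|² ≤ t (where e_p, e_q are unit vectors spanning p, q) with t < 1/n. Then |C| ≤ (1 − t)/(1/n − t). -/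
open Finset
open scoped ComplexConjugate

set_option maxHeartbeats 1000000 in
/-- Degree-1 LP bound for projective codes: a finite set of lines in `Kⁿ` (`K = ℝ` or
`ℂ`) with `cos²θ(p,q) ≤ t < 1/n` for distinct lines satisfies
`|C| ≤ (1 - t)/(1/n - t)`. -/
theorem stmt17 {K : Type*} [RCLike K] (n : ℕ) (hn : 0 < n) (t : ℝ) (ht : t < 1 / n)
    (C : Finset (Submodule K (EuclideanSpace K (Fin n))))
    (hdim : ∀ p ∈ C, Module.finrank K p = 1)
    (hang : ∀ p ∈ C, ∀ q ∈ C, p ≠ q →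
      ∀ e : EuclideanSpace K (Fin n), e ∈ p → ‖e‖ = 1 →
      ∀ f : EuclideanSpace K (Fin n), f ∈ q → ‖f‖ = 1 →
        ‖(inner K e f : K)‖ ^ 2 ≤ t) :
    (C.card : ℝ) ≤ (1 - t) / (1 / n - t) := by
  classical
  have hn' : (0:ℝ) < n := by exact_mod_cast hn
  have hn1 : (1:ℝ) ≤ n := by exact_mod_cast hn
  have ht1 : t < 1 := lt_of_lt_of_le ht (by rw [div_le_one hn']; exact hn1)
  have hden : (0:ℝ) < 1 / n - t := by linarith
  rcases C.eq_empty_or_nonempty with hC | hC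
  · subst hC; simp only [Finset.card_empty, Nat.cast_zero]
    exact div_nonneg (by linarith) hden.le
  -- choose unit vectors in each line
  have hex : ∀ p ∈ C, ∃ v : EuclideanSpace K (Fin n), v ∈ p ∧ ‖v‖ = 1 := by
    intro p hp
    have hpos : 0 < Module.finrank K p := by rw [hdim p hp]; norm_num
    have : Nontrivial p := Module.nontrivial_of_finrank_pos hpos
    obtain ⟨x, hx⟩ := exists_ne (0 : p)
    have hxne : (x : EuclideanSpace K (Fin n)) ≠ 0 := by
      simpa [Submodule.coe_eq_zero] using hx
    have hnx : (0:ℝ) < ‖(x : EuclideanSpace K (Fin n))‖ := norm_pos_iff.mpr hxne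
    refine ⟨((‖(x : EuclideanSpace K (Fin n))‖ : ℝ) : K)⁻¹ • (x : EuclideanSpace K (Fin n)),
      Submodule.smul_mem p _ x.2, ?_⟩
    rw [norm_smul, norm_inv, RCLike.norm_ofReal, abs_norm, inv_mul_cancel₀ hnx.ne']
  choose! e he hne using hex
  -- the "tensor" vectors
  set v : Submodule K (EuclideanSpace K (Fin n)) → EuclideanSpace K (Fin n × Fin n) :=
    fun p => WithLp.toLp 2 (fun ij : Fin n × Fin n => conj (e p ij.1) * e p ij.2) with hv
  set w : EuclideanSpace K (Fin n × Fin n) :=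
    WithLp.toLp 2 (fun ij : Fin n × Fin n => if ij.1 = ij.2 then (1:K) else 0) with hw
  have hvv : ∀ p q, (inner K (v p) (v q) : K)
      = conj ((inner K (e p) (e q) : K)) * (inner K (e p) (e q) : K) := by
    intro p q
    simp only [hv, PiLp.inner_apply, RCLike.inner_apply, map_mul, RCLike.conj_conj, map_sum]
    rw [Finset.sum_mul_sum, Fintype.sum_prod_type]
    apply Finset.sum_congr rfl; intro i _
    apply Finset.sum_congr rfl; intro j _
    simp only [map_mul, RCLike.conj_conj]
    ring
  have hre : ∀ p q, RCLike.re (inner K (v p) (v q) : K) = ‖(inner K (e p) (e q) : K)‖ ^ 2 := by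
    intro p q
    rw [hvv, RCLike.conj_mul, ← RCLike.ofReal_pow, RCLike.ofReal_re]
  have hself : ∀ p ∈ C, (inner K (e p) (e p) : K) = 1 := by
    intro p hp
    rw [inner_self_eq_norm_sq_to_K, hne p hp]
    norm_num
  -- inner of w with v p
  have hwv : ∀ p ∈ C, (inner K w (v p) : K) = 1 := by
    intro p hp
    have : (inner K w (v p) : K) = (inner K (e p) (e p) : K) := by
      simp only [hw, hv, PiLp.inner_apply, RCLike.inner_apply]
      rw [Fintype.sum_prod_type]
      simp [apply_ite (starRingEnd K), ite_mul]
      exact Finset.sum_congr rfl (fun _ _ => mul_comm _ _)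
    rw [this, hself p hp]
  have hww : RCLike.re (inner K w w : K) = n := by
    simp only [hw, PiLp.inner_apply, RCLike.inner_apply]
    rw [Fintype.sum_prod_type]
    simp [apply_ite (starRingEnd K), ite_mul]
  set s : EuclideanSpace K (Fin n × Fin n) := ∑ p ∈ C, v p with hs
  have hws : (inner K w s : K) = (C.card : K) := by
    rw [hs, inner_sum]
    rw [Finset.sum_congr rfl hwv]
    simp
  have hnormw : ‖w‖ ^ 2 = (n:ℝ) := by
    rw [← hww, ← @inner_self_eq_norm_sq K]
  have hss : RCLike.re (inner K s s : K) = ∑ p ∈ C, ∑ q ∈ C, RCLike.re (inner K (v p) (v q) : K) := by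
    rw [hs, sum_inner]
    rw [map_sum]
    apply Finset.sum_congr rfl
    intro p _
    rw [inner_sum, map_sum]
  have hssle : RCLike.re (inner K s s : K) ≤ (C.card : ℝ) + t * C.card * (C.card - 1) := by
    rw [hss]
    have hbound : ∀ p ∈ C, ∑ q ∈ C, RCLike.re (inner K (v p) (v q) : K)
        ≤ 1 + t * (C.card - 1) := by
      intro p hp
      rw [← Finset.add_sum_erase _ _ hp]
      have h1 : RCLike.re (inner K (v p) (v p) : K) = 1 := by
        rw [hre, hself p hp]; norm_num
      have h2 : ∑ q ∈ C.erase p, RCLike.re (inner K (v p) (v q) : K) ≤ t * (C.card - 1) := by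
        have : ∀ q ∈ C.erase p, RCLike.re (inner K (v p) (v q) : K) ≤ t := by
          intro q hq
          obtain ⟨hqp, hqC⟩ := Finset.mem_erase.mp hq
          rw [hre]
          exact hang p hp q hqC (Ne.symm hqp) (e p) (he p hp) (hne p hp)
            (e q) (he q hqC) (hne q hqC)
        calc ∑ q ∈ C.erase p, RCLike.re (inner K (v p) (v q) : K)
            ≤ ∑ _q ∈ C.erase p, t := Finset.sum_le_sum this
          _ = (C.erase p).card * t := by rw [Finset.sum_const, nsmul_eq_mul]
          _ = t * (C.card - 1) := by
              rw [Finset.card_erase_of_mem hp]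
              have : (1:ℕ) ≤ C.card := Finset.card_pos.mpr hC
              push_cast [this]
              ring
      linarith
    calc ∑ p ∈ C, ∑ q ∈ C, RCLike.re (inner K (v p) (v q) : K)
        ≤ ∑ _p ∈ C, (1 + t * (C.card - 1)) := Finset.sum_le_sum hbound
      _ = C.card * (1 + t * (C.card - 1)) := by rw [Finset.sum_const, nsmul_eq_mul]
      _ = (C.card : ℝ) + t * C.card * (C.card - 1) := by ring
  -- Cauchy-Schwarz
  have hcs : ‖(inner K w s : K)‖ ^ 2 ≤ ‖w‖ ^ 2 * ‖s‖ ^ 2 := by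
    have := norm_inner_le_norm (𝕜 := K) w s
    nlinarith [norm_nonneg (inner K w s : K), norm_nonneg w, norm_nonneg s]
  have hcard2 : ((C.card : ℝ)) ^ 2 ≤ (n:ℝ) * ((C.card : ℝ) + t * C.card * (C.card - 1)) := by
    have h1 : ‖(inner K w s : K)‖ ^ 2 = ((C.card : ℝ)) ^ 2 := by
      rw [hws]
      rw [RCLike.norm_natCast]
    have h2 : ‖s‖ ^ 2 = RCLike.re (inner K s s : K) := (@inner_self_eq_norm_sq K _ _ _ _ s).symm
    rw [h1, hnormw, h2] at hcs
    calc ((C.card : ℝ)) ^ 2 ≤ (n:ℝ) * RCLike.re (inner K s s : K) := hcs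
      _ ≤ (n:ℝ) * ((C.card : ℝ) + t * C.card * (C.card - 1)) := by
          apply mul_le_mul_of_nonneg_left hssle hn'.le
  have hN1 : (1:ℝ) ≤ C.card := by exact_mod_cast Finset.card_pos.mpr hC
  rw [le_div_iff₀ hden]
  have hninv : (n:ℝ) * (1/n) = 1 := by field_simp
  nlinarith [mul_pos hn' (lt_of_lt_of_le one_pos hN1), hcard2, mul_le_mul_of_nonneg_left hcard2 hn'.le]
end
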